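/- Every length-one ℤ[t]-module M with 4·M = 0 is isomorphic as a ℤ[t]-module to a direct sum M(p₁) ⊕ M(p₂) ⊕ … ⊕ M(p_k) ⊕ (ℤ[t]/2ℤ[t])^j for some integers k, j ≥ 0 and some polynomials p₁, …, p_k ∈ ℤ[t] \ 2ℤ[t]. -/

import Mathlib

/-- An `R`-module `M` has *length one* if there is a short exact sequence
`0 → F₁ → F₀ → M → 0` with `F₀`, `F₁` finitely generated free `R`-modules. -/
def IsLengthOne (R M : Type*) [CommRing R] [AddCommGroup M] [Module R M] : Prop :=
  ∃ (k l : ℕ) (f : (Fin k → R) →ₗ[R] (Fin l → R)) (g : (Fin l → R) →ₗ[R] M),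
    Function.Injective f ∧ Function.Surjective g ∧ LinearMap.range f = LinearMap.ker g

/-- The ring (and `ℤ[t]`-module) `ℤ[t]/4ℤ[t]`. -/
noncomputable abbrev Z4t : Type := Polynomial ℤ ⧸ Ideal.span {(4 : Polynomial ℤ)}

/-- For `p ∈ ℤ[t]`, `M(p)` is the `ℤ[t]`-submodule of `ℤ[t]/4ℤ[t]` generated by the
residue classes of `p` and of `2`; equivalently, it is generated by `φ, τ` subject only
to `2τ = 0` and `2φ = pτ`. -/
noncomputable def Mp (p : Polynomial ℤ) : Submodule (Polynomial ℤ) Z4t :=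
  Submodule.span (Polynomial ℤ)
    {Ideal.Quotient.mk (Ideal.span {(4 : Polynomial ℤ)}) p,
     Ideal.Quotient.mk (Ideal.span {(4 : Polynomial ℤ)}) 2}

open Polynomial

local notation "Rp" => Polynomial ℤ
local notation "I2" => (Ideal.span {(2 : Polynomial ℤ)})
local notation "F2" => (Polynomial ℤ ⧸ Ideal.span {(2 : Polynomial ℤ)})
local notation "mk2" => (Ideal.Quotient.mk (Ideal.span {(2 : Polynomial ℤ)}))
local notation "mk4" => (Ideal.Quotient.mk (Ideal.span {(4 : Polynomial ℤ)}))

lemma prime_two_poly : Prime (2 : Polynomial ℤ) := by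
  have h : (2 : Polynomial ℤ) = C 2 := by norm_num
  rw [h, Polynomial.prime_C_iff]
  exact Int.prime_two

lemma I2_prime : (Ideal.span {(2 : Polynomial ℤ)}).IsPrime :=
  (Ideal.span_singleton_prime (by norm_num)).mpr prime_two_poly

noncomputable def F2equiv : Polynomial (ZMod 2) ≃+* F2 := by
  have h0 : (ZMod 2) ≃+* (ℤ ⧸ Ideal.span {(2:ℤ)}) := by
    have := (Int.quotientSpanNatEquivZMod 2).symm
    rwa [Nat.cast_ofNat] at this
  refine (Polynomial.mapEquiv h0).trans ?_
  have := Ideal.polynomialQuotientEquivQuotientPolynomial (Ideal.span {(2:ℤ)})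
  rw [Ideal.map_span, Set.image_singleton] at this
  exact this

lemma F2_pir : IsPrincipalIdealRing F2 :=
  IsPrincipalIdealRing.of_surjective F2equiv.toRingHom F2equiv.surjective

lemma F2_domain : IsDomain F2 :=
  have := I2_prime
  Ideal.Quotient.isDomain _

/-- Key lemma: in a length-one module, no nonzero element is killed by both 2 and an odd q. -/
lemma chase {M : Type} [AddCommGroup M] [Module (Polynomial ℤ) M]
    (hM : IsLengthOne (Polynomial ℤ) M) {q : Polynomial ℤ}
    (hq : ¬ (2 : Polynomial ℤ) ∣ q) {x : M}
    (h2 : (2 : Polynomial ℤ) • x = 0) (hqx : q • x = 0) : x = 0 := by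
  obtain ⟨k, l, f, g, hf, hg, hfg⟩ := hM
  obtain ⟨v, rfl⟩ := hg x
  have hv2 : (2 : Polynomial ℤ) • v ∈ LinearMap.range f := by
    rw [hfg, LinearMap.mem_ker, map_smul, h2]
  have hvq : q • v ∈ LinearMap.range f := by
    rw [hfg, LinearMap.mem_ker, map_smul, hqx]
  obtain ⟨a, ha⟩ := hv2
  obtain ⟨b, hb⟩ := hvq
  have hab : q • a = (2 : Polynomial ℤ) • b := by
    apply hf
    rw [map_smul, map_smul, ha, hb, smul_smul, smul_smul, mul_comm]
  have hdvd : ∀ i, (2 : Polynomial ℤ) ∣ a i := by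
    intro i
    have : q * a i = 2 * b i := congrFun hab i
    rcases (prime_two_poly.dvd_mul.mp ⟨b i, this⟩ : (2:Polynomial ℤ) ∣ q ∨ _) with h | h
    · exact absurd h hq
    · exact h
  choose c hc using hdvd
  have hfc : f c = v := by
    have h2' : (2 : Polynomial ℤ) • f c = (2 : Polynomial ℤ) • v := by
      rw [← ha, ← map_smul]
      congr 1
      funext i
      simp only [Pi.smul_apply, smul_eq_mul, hc i]
    exact smul_right_injective _ (by norm_num : (2:Polynomial ℤ) ≠ 0) h2'
  have : v ∈ LinearMap.ker g := by
    rw [← hfg]; exact ⟨c, hfc⟩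
  exact this

lemma div4_iff {p a b : Polynomial ℤ} (hp : ¬ (2:Polynomial ℤ) ∣ p) :
    (4:Polynomial ℤ) ∣ a * p + 2 * b ↔ ∃ u, a = 2 * u ∧ (2:Polynomial ℤ) ∣ u * p + b := by
  constructor
  · rintro ⟨w, hw⟩
    have h2a : (2:Polynomial ℤ) ∣ a := by
      have hd : (2:Polynomial ℤ) ∣ a * p := ⟨2*w - b, by linear_combination hw⟩
      rcases prime_two_poly.dvd_mul.mp hd with h | h
      · exact h
      · exact absurd h hp
    obtain ⟨u, rfl⟩ := h2a
    refine ⟨u, rfl, w, ?_⟩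
    have h2 : (2:Polynomial ℤ) * (u * p + b) = 2 * (2 * w) := by linear_combination hw
    exact mul_left_cancel₀ (by norm_num : (2:Polynomial ℤ) ≠ 0) h2
  · rintro ⟨u, rfl, w, hw⟩
    exact ⟨w, by linear_combination 2 * hw⟩

set_option maxHeartbeats 2000000 in
/-- Every length-one `ℤ[t]`-module `M` with `4·M = 0` is isomorphic to a direct sum
`M(p₁) ⊕ ⋯ ⊕ M(p_k) ⊕ (ℤ[t]/2ℤ[t])^j` for some `k, j ≥ 0` and `p₁, …, p_k ∈ ℤ[t] ∖ 2ℤ[t]`. -/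
theorem exponentFour_decomposition
    (M : Type) [AddCommGroup M] [Module (Polynomial ℤ) M]
    (hM : IsLengthOne (Polynomial ℤ) M)
    (hexp : ∀ x : M, (4 : Polynomial ℤ) • x = 0) :
    ∃ (k j : ℕ) (p : Fin k → Polynomial ℤ),
      (∀ i, p i ∉ Ideal.span {(2 : Polynomial ℤ)}) ∧
      Nonempty (M ≃ₗ[Polynomial ℤ]
        ((Π i : Fin k, Mp (p i)) ×
          (Fin j → Polynomial ℤ ⧸ Ideal.span {(2 : Polynomial ℤ)}))) := by

  classical
  haveI hdom : IsDomain F2 := F2_domain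
  haveI hpir : IsPrincipalIdealRing F2 := F2_pir
  haveI : Module.Finite Rp M := by
    obtain ⟨k, l, f, g, hf, hg, hfg⟩ := hM
    exact Module.Finite.of_surjective g hg
  haveI : IsNoetherian Rp (Submodule.torsionBy Rp M 2) :=
    isNoetherian_of_fg_of_noetherian _ (IsNoetherian.noetherian _)
  haveI : IsScalarTower Rp F2 (Submodule.torsionBy Rp M 2) := by
    constructor
    intro r s v
    obtain ⟨s', rfl⟩ := Ideal.Quotient.mk_surjective s
    have h1 : r • (mk2 s') = mk2 (r * s') := by
      rfl
    rw [h1, Submodule.torsionBy.mk_ideal_smul, Submodule.torsionBy.mk_ideal_smul, mul_smul]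
  haveI : Module.Finite F2 (Submodule.torsionBy Rp M 2) :=
    Module.Finite.of_restrictScalars_finite Rp F2 _
  haveI : NoZeroSMulDivisors F2 (Submodule.torsionBy Rp M 2) := by
    constructor
    intro s v hsv
    by_contra hcon
    push_neg at hcon
    obtain ⟨hs, hv⟩ := hcon
    obtain ⟨s', rfl⟩ := Ideal.Quotient.mk_surjective s
    have hq : ¬ (2:Rp) ∣ s' := fun hdvd =>
      hs (Ideal.Quotient.eq_zero_iff_mem.mpr (Ideal.mem_span_singleton.mpr hdvd))
    rw [Submodule.torsionBy.mk_ideal_smul] at hsv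
    have h2 : (2:Rp) • (v : M) = 0 := (Submodule.mem_torsionBy_iff _ _).mp v.2
    have hq2 : s' • (v : M) = 0 := by
      have := congrArg (Subtype.val) hsv
      simpa using this
    exact hv (Subtype.ext (chase hM hq h2 hq2))
  haveI : Module.Free F2 (Submodule.torsionBy Rp M 2) :=
    Module.free_of_finite_type_torsion_free'
  set ι := Module.Free.ChooseBasisIndex F2 (Submodule.torsionBy Rp M 2) with hι
  let b0 : Module.Basis ι F2 (Submodule.torsionBy Rp M 2) := Module.Free.chooseBasis F2 _
  -- the map `x ↦ 2 • x` into the 2-torsion submodule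
  have hmu : ∀ x : M, (LinearMap.lsmul Rp M 2) x ∈ Submodule.torsionBy Rp M 2 := by
    intro x
    rw [Submodule.mem_torsionBy_iff]
    have : (2:Rp) • (2:Rp) • x = (4:Rp) • x := by rw [smul_smul]; norm_num
    simpa [this] using hexp x
  set μ : M →ₗ[Rp] (Submodule.torsionBy Rp M 2) :=
    LinearMap.codRestrict _ (LinearMap.lsmul Rp M 2) hmu with hμdef
  have hμcoe : ∀ x : M, (μ x : M) = (2:Rp) • x := fun x => rfl
  -- the image of `μ` as an F2-submodule
  let N : Submodule F2 (Submodule.torsionBy Rp M 2) :=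
    { carrier := Set.range μ
      add_mem' := by rintro w w' ⟨x, rfl⟩ ⟨y, rfl⟩; exact ⟨x + y, map_add μ x y⟩
      zero_mem' := ⟨0, map_zero μ⟩
      smul_mem' := by
        rintro c w ⟨x, rfl⟩
        obtain ⟨r, rfl⟩ := Ideal.Quotient.mk_surjective c
        refine ⟨r • x, ?_⟩
        rw [map_smul, Submodule.torsionBy.mk_ideal_smul] }
  obtain ⟨m, bV, bN, femb, q, hsnf⟩ := Submodule.smithNormalForm b0 N
  -- nonzero diagonal entries
  have hq0 : ∀ i, q i ≠ 0 := by
    intro i h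
    have h1 : ((bN i : Submodule.torsionBy Rp M 2)) = 0 := by rw [hsnf i, h]; exact zero_smul F2 (bV (femb i))
    exact Module.Basis.ne_zero bN i (Subtype.ext h1)
  have hpex : ∀ i, ∃ r : Rp, mk2 r = q i := fun i => Ideal.Quotient.mk_surjective _
  choose p hp using hpex
  have hpnot : ∀ i, p i ∉ I2 := by
    intro i h
    exact hq0 i (by rw [← hp i, Ideal.Quotient.eq_zero_iff_mem]; exact h)
  have hp2 : ∀ i, ¬ (2:Rp) ∣ p i := fun i h => hpnot i (Ideal.mem_span_singleton.mpr h)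
  -- the basis vectors as elements of M
  set E : ι → M := fun s => ((bV s : Submodule.torsionBy Rp M 2) : M) with hEdef
  have hE2 : ∀ s, (2:Rp) • E s = 0 := fun s => (Submodule.mem_torsionBy_iff _ _).mp (bV s).2
  have hkill : ∀ (d : Rp) (s : ι), (2:Rp) ∣ d → d • E s = 0 := by
    rintro d s ⟨w, rfl⟩
    rw [mul_comm, mul_smul, hE2, smul_zero]
  -- the lifts ff i with 2 • ff i = p i • E (femb i)
  have hffex : ∀ i : Fin m, ∃ x : M, μ x = (bN i : Submodule.torsionBy Rp M 2) :=
    fun i => (bN i).2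
  choose ff hff using hffex
  have h2ff : ∀ i, (2:Rp) • ff i = p i • E (femb i) := by
    intro i
    calc (2:Rp) • ff i = (μ (ff i) : M) := rfl
      _ = ((bN i : Submodule.torsionBy Rp M 2) : M) := by rw [hff i]
      _ = ((q i • bV (femb i) : Submodule.torsionBy Rp M 2) : M) := by rw [hsnf i]
      _ = ((p i • bV (femb i) : Submodule.torsionBy Rp M 2) : M) := by
            rw [← hp i, Submodule.torsionBy.mk_ideal_smul]
      _ = p i • E (femb i) := rfl
  -- index bookkeeping
  set jn := Fintype.card {s : ι // ¬ s ∈ Set.range femb} with hjn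
  let σ : (Fin m ⊕ Fin jn) ≃ ι :=
    (Equiv.sumCongr (Equiv.ofInjective femb femb.injective)
      (Fintype.equivFin {s : ι // ¬ s ∈ Set.range femb}).symm).trans
      (Equiv.sumCompl (· ∈ Set.range femb))
  have hσ : ∀ i, σ (Sum.inl i) = femb i := by
    intro i
    simp [σ, Equiv.sumCompl]
  set E' : Fin jn → M := fun r => E (σ (Sum.inr r)) with hE'def
  -- sum splitting
  have hsplit : ∀ h : ι → M, ∑ s, h s = (∑ i : Fin m, h (femb i)) + ∑ r : Fin jn, h (σ (Sum.inr r)) := by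
    intro h
    rw [← Equiv.sum_comp σ h, Fintype.sum_sum_type]
    simp [hσ]
  -- every element of V is an Rp-combination of the E's
  have hcoesum : ∀ f : ι → Submodule.torsionBy Rp M 2,
      ((∑ s, f s : Submodule.torsionBy Rp M 2) : M) = ∑ s, ((f s : M)) := by
    intro f
    exact map_sum (Submodule.torsionBy Rp M 2).subtype f Finset.univ
  have hVspan : ∀ v : Submodule.torsionBy Rp M 2, ∃ G : ι → Rp, (v : M) = ∑ s, G s • E s := by
    intro v
    choose G hG using fun s => Ideal.Quotient.mk_surjective (I := I2) (bV.repr v s)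
    refine ⟨G, ?_⟩
    calc (v : M) = ((∑ s, bV.repr v s • bV s : Submodule.torsionBy Rp M 2) : M) := by
          rw [Module.Basis.sum_repr]
      _ = ∑ s, G s • E s := by
          rw [hcoesum]
          refine Finset.sum_congr rfl fun s _ => ?_
          rw [← hG s, Submodule.torsionBy.mk_ideal_smul]
          rfl
  -- linear independence of the E's mod 2
  have hVsum : ∀ G : ι → Rp, (∑ s, G s • E s) = 0 → ∀ s, mk2 (G s) = 0 := by
    intro G hG0
    have h1 : ((∑ s, mk2 (G s) • bV s : Submodule.torsionBy Rp M 2) : M) = ∑ s, G s • E s := by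
      rw [hcoesum]
      refine Finset.sum_congr rfl fun s _ => ?_
      rw [Submodule.torsionBy.mk_ideal_smul]
      rfl
    have h2 : (∑ s, mk2 (G s) • bV s : Submodule.torsionBy Rp M 2) = 0 := by
      have h3 : ((∑ s, mk2 (G s) • bV s : Submodule.torsionBy Rp M 2) : M)
          = ((0 : Submodule.torsionBy Rp M 2) : M) := by rw [h1, hG0]; rfl
      exact Subtype.coe_injective h3
    exact Fintype.linearIndependent_iff.mp bV.linearIndependent (fun s => mk2 (G s)) h2
  -- the two linear maps
  let A : ∀ _ : Fin m, (Rp × Rp) →ₗ[Rp] M := fun i =>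
    (LinearMap.fst Rp Rp Rp).smulRight (ff i) + (LinearMap.snd Rp Rp Rp).smulRight (E (femb i))
  let B : ∀ _ : Fin jn, Rp →ₗ[Rp] M := fun r => LinearMap.toSpanSingleton Rp M (E' r)
  let Θ : ((Fin m → Rp × Rp) × (Fin jn → Rp)) →ₗ[Rp] M :=
    (LinearMap.lsum Rp (fun _ : Fin m => Rp × Rp) ℕ A).comp (LinearMap.fst Rp _ _)
    + (LinearMap.lsum Rp (fun _ : Fin jn => Rp) ℕ B).comp (LinearMap.snd Rp _ _)
  have hΘapp : ∀ (x : Fin m → Rp × Rp) (c : Fin jn → Rp),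
      Θ (x, c) = (∑ i : Fin m, ((x i).1 • ff i + (x i).2 • E (femb i))) + ∑ r : Fin jn, c r • E' r := by
    intro x c
    simp only [Θ, A, B, LinearMap.add_apply, LinearMap.coe_comp, Function.comp_apply,
      LinearMap.fst_apply, LinearMap.snd_apply, LinearMap.lsum_apply, LinearMap.sum_apply,
      LinearMap.coe_proj, Function.eval, LinearMap.smulRight_apply,
      LinearMap.toSpanSingleton_apply]
  let L : ∀ _ : Fin m, (Rp × Rp) →ₗ[Rp] Z4t := fun i =>
    (LinearMap.fst Rp Rp Rp).smulRight (mk4 (p i)) + (LinearMap.snd Rp Rp Rp).smulRight (mk4 2)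
  have hLmem : ∀ i z, L i z ∈ Mp (p i) := by
    intro i z
    refine Submodule.mem_span_pair.mpr ⟨z.1, z.2, ?_⟩
    simp [L]
  have hLapp : ∀ i (z : Rp × Rp), L i z = mk4 (z.1 * p i + 2 * z.2) := by
    intro i z
    simp [L, Algebra.smul_def, mul_comm]
    rfl
  let Θ' : ((Fin m → Rp × Rp) × (Fin jn → Rp)) →ₗ[Rp]
      ((Π i : Fin m, Mp (p i)) × (Fin jn → Rp ⧸ I2)) :=
    LinearMap.prodMap
      (LinearMap.pi (fun i => (LinearMap.codRestrict (Mp (p i)) (L i) (hLmem i)).comp (LinearMap.proj i)))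
      (LinearMap.pi (fun r => (Submodule.mkQ I2).comp (LinearMap.proj r)))
  -- surjectivity of Θ
  have hsurjΘ : Function.Surjective Θ := by
    intro x
    have hnx : μ x ∈ N := ⟨x, rfl⟩
    choose D hD using fun i : Fin m =>
      Ideal.Quotient.mk_surjective (I := I2) (bN.repr ⟨μ x, hnx⟩ i)
    have hrepr : ∑ i : Fin m, bN.repr ⟨μ x, hnx⟩ i • bN i = (⟨μ x, hnx⟩ : N) :=
      bN.sum_repr _
    have h2 : ∀ i : Fin m, ((((bN.repr ⟨μ x, hnx⟩ i • bN i : N) :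
        Submodule.torsionBy Rp M 2)) : M) = D i • ((2:Rp) • ff i) := by
      intro i
      rw [← hD i]
      have s1 : ((mk2 (D i) • bN i : N) : Submodule.torsionBy Rp M 2)
          = mk2 (D i) • (bN i : Submodule.torsionBy Rp M 2) := rfl
      rw [s1, Submodule.torsionBy.mk_ideal_smul, ← hff i]
      rfl
    have h4 : ((((∑ i : Fin m, bN.repr ⟨μ x, hnx⟩ i • bN i : N) :
        Submodule.torsionBy Rp M 2)) : M)
        = ∑ i : Fin m, ((((bN.repr ⟨μ x, hnx⟩ i • bN i : N) :
            Submodule.torsionBy Rp M 2)) : M) := by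
      rw [show ((∑ i : Fin m, bN.repr ⟨μ x, hnx⟩ i • bN i : N) :
            Submodule.torsionBy Rp M 2)
          = ∑ i : Fin m, ((bN.repr ⟨μ x, hnx⟩ i • bN i : N) :
            Submodule.torsionBy Rp M 2) from map_sum N.subtype _ _]
      exact map_sum (Submodule.torsionBy Rp M 2).subtype _ Finset.univ
    have key : (2:Rp) • x = ∑ i : Fin m, D i • ((2:Rp) • ff i) := by
      calc (2:Rp) • x
          = ((((⟨μ x, hnx⟩ : N) : Submodule.torsionBy Rp M 2)) : M) := rfl
        _ = ((((∑ i : Fin m, bN.repr ⟨μ x, hnx⟩ i • bN i : N) :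
              Submodule.torsionBy Rp M 2)) : M) := by rw [hrepr]
        _ = ∑ i : Fin m, ((((bN.repr ⟨μ x, hnx⟩ i • bN i : N) :
              Submodule.torsionBy Rp M 2)) : M) := h4
        _ = ∑ i : Fin m, D i • ((2:Rp) • ff i) := Finset.sum_congr rfl (fun i _ => h2 i)
    have hw : (2:Rp) • (x - ∑ i : Fin m, D i • ff i) = 0 := by
      rw [smul_sub, Finset.smul_sum, key, sub_eq_zero]
      exact Finset.sum_congr rfl (fun i _ => (smul_comm _ _ _))
    have hwv : x - ∑ i : Fin m, D i • ff i ∈ Submodule.torsionBy Rp M 2 :=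
      (Submodule.mem_torsionBy_iff _ _).mpr hw
    obtain ⟨G, hG⟩ := hVspan ⟨_, hwv⟩
    refine ⟨(fun i => (D i, G (femb i)), fun r => G (σ (Sum.inr r))), ?_⟩
    rw [hΘapp]
    dsimp only
    simp only [hE'def]
    rw [hsplit (fun s => G s • E s)] at hG
    rw [Finset.sum_add_distrib, add_assoc, ← hG]
    show (∑ i : Fin m, D i • ff i) + (x - ∑ i : Fin m, D i • ff i) = x
    abel
  -- surjectivity of Θ'
  have hsurjΘ' : Function.Surjective Θ' := by
    rintro ⟨y, d⟩
    have hyi : ∀ i, ∃ a b : Rp, a • mk4 (p i) + b • mk4 2 = (y i : Z4t) :=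
      fun i => Submodule.mem_span_pair.mp (y i).2
    choose a b hab using hyi
    choose c hc using fun r => Ideal.Quotient.mk_surjective (I := I2) (d r)
    refine ⟨(fun i => (a i, b i), c), ?_⟩
    have hL : ∀ i, L i (a i, b i) = (y i : Z4t) := by
      intro i
      rw [← hab i]
      simp [L]
    refine Prod.ext (funext fun i => ?_) (funext fun r => ?_)
    · exact Subtype.ext (by rw [← hL i]; rfl)
    · exact hc r
  have hmk0 : ∀ y : Rp, mk2 y = 0 ↔ (2:Rp) ∣ y := fun y => by
    rw [Ideal.Quotient.eq_zero_iff_mem, Ideal.mem_span_singleton]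
  -- characterization of the kernel of Θ
  have hkerΘ : ∀ z : (Fin m → Rp × Rp) × (Fin jn → Rp), Θ z = 0 ↔
      ((∀ i, ∃ u, (z.1 i).1 = 2 * u ∧ (2:Rp) ∣ (u * p i + (z.1 i).2)) ∧ ∀ r, (2:Rp) ∣ z.2 r) := by
    rintro ⟨x, c⟩
    rw [hΘapp]
    simp only [hE'def]
    constructor
    · intro h
      have e1 : ∀ i : Fin m, (2:Rp) • ((x i).1 • ff i + (x i).2 • E (femb i))
          = ((x i).1 * p i) • E (femb i) := by
        intro i
        rw [smul_add, smul_comm, h2ff i, smul_comm ((2:Rp)), hE2, smul_zero, add_zero, smul_smul]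
      have e2 : ∀ r : Fin jn, (2:Rp) • (c r • E (σ (Sum.inr r))) = 0 := by
        intro r
        rw [smul_comm, hE2, smul_zero]
      have h2 : ∑ i : Fin m, ((x i).1 * p i) • E (femb i) = 0 := by
        have h4 := congrArg (fun y : M => (2:Rp) • y) h
        simpa [Finset.smul_sum, e1, e2] using h4
      have hstep1 : ∀ i, (2:Rp) ∣ (x i).1 := by
        intro i
        have hG1 : ∑ s, (fun s => Sum.elim (fun i => (x i).1 * p i) (fun _ => (0:Rp)) (σ.symm s)) s • E s = 0 := by
          rw [hsplit]
          have hg1a : ∀ i : Fin m, σ.symm (femb i) = Sum.inl i := by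
            intro i; rw [← hσ i, Equiv.symm_apply_apply]
          simp only [hg1a, Equiv.symm_apply_apply, Sum.elim_inl, Sum.elim_inr, zero_smul,
            Finset.sum_const_zero, add_zero]
          exact h2
        have := hVsum _ hG1 (femb i)
        rw [← hσ i, Equiv.symm_apply_apply] at this
        simp only [hσ, Sum.elim_inl] at this
        have hdvd : (2:Rp) ∣ (x i).1 * p i := (hmk0 _).mp this
        rcases prime_two_poly.dvd_mul.mp hdvd with hh | hh
        · exact hh
        · exact absurd hh (hp2 i)
      choose u hu using hstep1
      have e3 : ∀ i : Fin m, (x i).1 • ff i + (x i).2 • E (femb i)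
          = (u i * p i + (x i).2) • E (femb i) := by
        intro i
        rw [hu i, mul_comm, mul_smul, h2ff i, smul_smul, add_smul]
      have h5 : (∑ i : Fin m, (u i * p i + (x i).2) • E (femb i))
          + ∑ r : Fin jn, c r • E (σ (Sum.inr r)) = 0 := by
        rw [← Finset.sum_congr rfl (fun i _ => e3 i)]
        exact h
      have hG2 : ∑ s, (fun s => Sum.elim (fun i => u i * p i + (x i).2) (fun r => c r) (σ.symm s)) s • E s = 0 := by
        rw [hsplit]
        have hg1a : ∀ i : Fin m, σ.symm (femb i) = Sum.inl i := by
          intro i; rw [← hσ i, Equiv.symm_apply_apply]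
        simp only [hg1a, Equiv.symm_apply_apply, Sum.elim_inl, Sum.elim_inr]
        exact h5
      refine ⟨fun i => ⟨u i, hu i, ?_⟩, fun r => ?_⟩
      · have := hVsum _ hG2 (femb i)
        rw [← hσ i, Equiv.symm_apply_apply] at this
        simp only [Sum.elim_inl] at this
        exact (hmk0 _).mp this
      · have := hVsum _ hG2 (σ (Sum.inr r))
        rw [Equiv.symm_apply_apply] at this
        simp only [Sum.elim_inr] at this
        exact (hmk0 _).mp this
    · rintro ⟨h1, h2⟩
      have e3 : ∀ i : Fin m, (x i).1 • ff i + (x i).2 • E (femb i) = 0 := by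
        intro i
        obtain ⟨u, hu, hdvd⟩ := h1 i
        rw [hu, mul_comm, mul_smul, h2ff i, smul_smul, ← add_smul]
        exact hkill _ _ hdvd
      have e4 : ∀ r : Fin jn, c r • E (σ (Sum.inr r)) = 0 := fun r => hkill _ _ (h2 r)
      rw [Finset.sum_congr rfl (fun i _ => e3 i), Finset.sum_congr rfl (fun r _ => e4 r)]
      simp
  -- characterization of the kernel of Θ'
  have hΘ'1 : ∀ (z : (Fin m → Rp × Rp) × (Fin jn → Rp)) (i : Fin m),
      (((Θ' z).1 i : Z4t)) = mk4 ((z.1 i).1 * p i + 2 * (z.1 i).2) := fun z i => hLapp i _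
  have hΘ'2 : ∀ (z : (Fin m → Rp × Rp) × (Fin jn → Rp)) (r : Fin jn),
      (Θ' z).2 r = Submodule.Quotient.mk (z.2 r) := fun z r => rfl
  have hkerΘ' : ∀ z : (Fin m → Rp × Rp) × (Fin jn → Rp), Θ' z = 0 ↔
      ((∀ i, ∃ u, (z.1 i).1 = 2 * u ∧ (2:Rp) ∣ (u * p i + (z.1 i).2)) ∧ ∀ r, (2:Rp) ∣ z.2 r) := by
    intro z
    rw [Prod.ext_iff, funext_iff, funext_iff]
    simp only [Prod.fst_zero, Prod.snd_zero]
    have c1 : ∀ i : Fin m, ((Θ' z).1 i = (0 : (Π i : Fin m, Mp (p i))) i) ↔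
        (∃ u, (z.1 i).1 = 2 * u ∧ (2:Rp) ∣ (u * p i + (z.1 i).2)) := by
      intro i
      rw [← div4_iff (hp2 i), ← Ideal.mem_span_singleton,
        ← Ideal.Quotient.eq_zero_iff_mem, ← hΘ'1 z i]
      constructor
      · intro h; rw [h]; rfl
      · intro h; exact Subtype.ext h
    have c2 : ∀ r : Fin jn, ((Θ' z).2 r = (0 : Fin jn → Rp ⧸ I2) r) ↔ (2:Rp) ∣ z.2 r := by
      intro r
      rw [hΘ'2 z r, ← Ideal.mem_span_singleton]
      show Submodule.Quotient.mk (z.2 r) = 0 ↔ _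
      rw [Submodule.Quotient.mk_eq_zero]
    rw [forall_congr' c1, forall_congr' c2]
  -- kernels agree
  have hker : LinearMap.ker Θ = LinearMap.ker Θ' := by
    ext z
    rw [LinearMap.mem_ker, LinearMap.mem_ker, hkerΘ, hkerΘ']
  refine ⟨m, jn, p, hpnot, ⟨?_⟩⟩
  exact ((LinearMap.quotKerEquivOfSurjective Θ hsurjΘ).symm.trans
    (Submodule.quotEquivOfEq _ _ hker)).trans
    (LinearMap.quotKerEquivOfSurjective Θ' hsurjΘ')
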